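/- Let (Ω,ℱ,ℙ) be a probability space with a left-continuous filtration (ℱ(t))_{0≤t≤T}, and let (B(t))_{0≤t≤T} be an adapted continuous nonnegative process with E[∫₀ᵀ B(u)du] < ∞. Let A(t) := ∫₀ᵗ B(u)du, and fix t₀ ∈ [0,T] such that lim_{t→t₀} E[(A(t)−A(t₀))/(t−t₀)] = E[B(t₀)]. Then lim_{t↓t₀} E[A(t)−A(t₀) | ℱ(t₀)]/(t−t₀) = B(t₀) in L¹(ℙ), and lim_{t↑t₀} E[A(t₀)−A(t) | ℱ(t)]/(t₀−t) = B(t₀) in L¹(ℙ). -/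

import Mathlib

open MeasureTheory Filter

private lemma integral_abs_sub_eq_toReal_eLpNorm {Ω : Type*} {m0 : MeasurableSpace Ω}
    (μ : Measure Ω) {f g : Ω → ℝ} (hf : Integrable f μ) (hg : Integrable g μ) :
    ∫ ω, |f ω - g ω| ∂μ = (eLpNorm (f - g) 1 μ).toReal := by
  have h : Integrable (fun ω => f ω - g ω) μ := hf.sub hg
  rw [eLpNorm_one_eq_lintegral_enorm]
  calc ∫ ω, |f ω - g ω| ∂μ = ∫ ω, ‖f ω - g ω‖ ∂μ := by
        exact integral_congr_ae (Filter.Eventually.of_forall fun ω =>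
          (Real.norm_eq_abs _).symm)
    _ = (∫⁻ ω, ‖f ω - g ω‖ₑ ∂μ).toReal := integral_norm_eq_lintegral_enorm h.1
    _ = (∫⁻ ω, ‖(f - g) ω‖ₑ ∂μ).toReal := rfl

/-- Trajectorial differentiation of time integrals under conditional expectations:
if `t₀` is a Lebesgue point for the expected difference quotient of
`A(t) = ∫₀ᵗ B(u) du`, then the conditional-expectation difference quotients converge
to `B(t₀)` in `L¹(ℙ)`, from the right (conditioning on `ℱ(t₀)`) and from the left
(conditioning on `ℱ(t)`). -/
theorem stmt8 {Ω : Type*} {m0 : MeasurableSpace Ω} (ℙ : Measure Ω)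
    [IsProbabilityMeasure ℙ]
    (T : ℝ) (hT : 0 < T) (F : Filtration ℝ m0)
    (hF_left : ∀ t ∈ Set.Ioc (0 : ℝ) T,
      (F t : MeasurableSpace Ω) = ⨆ s ∈ Set.Iio t, (F s : MeasurableSpace Ω))
    (B : ℝ → Ω → ℝ)
    (hB_cont : ∀ ω, Continuous fun t => B t ω)
    (hB_adapted : ∀ t, StronglyMeasurable[F t] (B t))
    (hB_nonneg : ∀ t ω, 0 ≤ B t ω)
    (hB_int : Integrable (fun ω => ∫ u in (0 : ℝ)..T, B u ω) ℙ)
    (A : ℝ → Ω → ℝ) (hA : ∀ t ω, A t ω = ∫ u in (0 : ℝ)..t, B u ω)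
    (t₀ : ℝ) (ht₀ : t₀ ∈ Set.Icc (0 : ℝ) T)
    (hLeb : Tendsto (fun t => ∫ ω, (A t ω - A t₀ ω) / (t - t₀) ∂ℙ)
      (nhdsWithin t₀ (Set.Icc 0 T \ {t₀})) (nhds (∫ ω, B t₀ ω ∂ℙ))) :
    Tendsto
        (fun t => ∫ ω,
          |(ℙ[fun ω' => A t ω' - A t₀ ω' | F t₀]) ω / (t - t₀) - B t₀ ω| ∂ℙ)
        (nhdsWithin t₀ (Set.Ioc t₀ T)) (nhds 0) ∧
      Tendsto
        (fun t => ∫ ω,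
          |(ℙ[fun ω' => A t₀ ω' - A t ω' | F t]) ω / (t₀ - t) - B t₀ ω| ∂ℙ)
        (nhdsWithin t₀ (Set.Ico 0 t₀)) (nhds 0) := by
  obtain ⟨ht₀0, ht₀T⟩ := ht₀
  set l₀ := nhdsWithin t₀ (Set.Icc 0 T \ {t₀}) with hl₀
  -- basic measurability
  have hBm : ∀ u, StronglyMeasurable (B u) := fun u => (hB_adapted u).mono (F.le u)
  have hBj : StronglyMeasurable (Function.uncurry B) :=
    stronglyMeasurable_uncurry_of_continuous_of_stronglyMeasurable hB_cont hBm
  have hBi : ∀ (ω : Ω) (a b : ℝ), IntervalIntegrable (fun u => B u ω) volume a b :=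
    fun ω a b => (hB_cont ω).intervalIntegrable a b
  have hAm : ∀ t, StronglyMeasurable (A t) := by
    intro t
    have hAe : A t = fun ω => ∫ u in (0 : ℝ)..t, B u ω := funext fun ω => hA t ω
    rw [hAe]
    simp only [intervalIntegral]
    exact (hBj.integral_prod_left).sub (hBj.integral_prod_left)
  have hK_nonneg : ∀ ω, 0 ≤ ∫ u in (0 : ℝ)..T, B u ω := fun ω =>
    intervalIntegral.integral_nonneg hT.le fun u _ => hB_nonneg u ω
  set D : ℝ → Ω → ℝ := fun t ω => (A t ω - A t₀ ω) / (t - t₀) with hD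
  set c := ∫ ω, B t₀ ω ∂ℙ with hc
  have hLeb' : Tendsto (fun t => ∫ ω, D t ω ∂ℙ) l₀ (nhds c) := hLeb
  have hsub : ∀ t ω, A t ω - A t₀ ω = ∫ u in t₀..t, B u ω := fun t ω => by
    rw [hA, hA]
    exact intervalIntegral.integral_interval_sub_left (hBi ω 0 t) (hBi ω 0 t₀)
  -- nonnegativity and bound for the difference quotient
  have hDalt : ∀ t ω, t < t₀ → D t ω = (∫ u in t..t₀, B u ω) / (t₀ - t) := by
    intro t ω h
    show (A t ω - A t₀ ω) / (t - t₀) = _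
    rw [hsub t ω, intervalIntegral.integral_symm, ← neg_sub t₀ t, neg_div_neg_eq]
  have hD_nonneg : ∀ t ∈ Set.Icc (0 : ℝ) T \ {t₀}, ∀ ω, 0 ≤ D t ω := by
    rintro t ⟨⟨h0t, htT⟩, hne⟩ ω
    rcases lt_or_gt_of_ne (Set.mem_singleton_iff.not.mp hne) with h | h
    · rw [hDalt t ω h]
      exact div_nonneg
        (intervalIntegral.integral_nonneg h.le fun u _ => hB_nonneg u ω) (by linarith)
    · show 0 ≤ (A t ω - A t₀ ω) / (t - t₀)
      rw [hsub t ω]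
      exact div_nonneg
        (intervalIntegral.integral_nonneg h.le fun u _ => hB_nonneg u ω) (by linarith)
  have hD_le : ∀ t ∈ Set.Icc (0 : ℝ) T \ {t₀}, ∀ ω,
      D t ω ≤ |t - t₀|⁻¹ * ∫ u in (0 : ℝ)..T, B u ω := by
    rintro t ⟨⟨h0t, htT⟩, hne⟩ ω
    have hBpos : 0 ≤ᵐ[volume.restrict (Set.Ioc (0 : ℝ) T)] fun u => B u ω :=
      Filter.Eventually.of_forall fun u => hB_nonneg u ω
    rcases lt_or_gt_of_ne (Set.mem_singleton_iff.not.mp hne) with h | h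
    · have hle : (∫ u in t..t₀, B u ω) ≤ ∫ u in (0 : ℝ)..T, B u ω :=
        intervalIntegral.integral_mono_interval h0t h.le ht₀T hBpos (hBi ω 0 T)
      have habs : |t - t₀| = t₀ - t := by rw [abs_sub_comm]; exact abs_of_pos (by linarith)
      rw [hDalt t ω h, habs, ← div_eq_inv_mul]
      exact (div_le_div_iff_of_pos_right (by linarith)).mpr hle
    · have hle : (∫ u in t₀..t, B u ω) ≤ ∫ u in (0 : ℝ)..T, B u ω :=
        intervalIntegral.integral_mono_interval ht₀0 h.le htT hBpos (hBi ω 0 T)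
      have habs : |t - t₀| = t - t₀ := abs_of_pos (by linarith)
      have hkey : D t ω = (∫ u in t₀..t, B u ω) / (t - t₀) := by
        show (A t ω - A t₀ ω) / (t - t₀) = _
        rw [hsub t ω]
      rw [hkey, habs, ← div_eq_inv_mul]
      exact (div_le_div_iff_of_pos_right (by linarith)).mpr hle
  have hD_meas : ∀ t, StronglyMeasurable (D t) := by
    intro t
    have h1 : Measurable fun ω => (A t ω - A t₀ ω) * (t - t₀)⁻¹ :=
      ((hAm t).measurable.sub (hAm t₀).measurable).mul measurable_const
    have h2 : D t = fun ω => (A t ω - A t₀ ω) * (t - t₀)⁻¹ := by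
      funext ω; exact div_eq_mul_inv _ _
    rw [h2]
    exact h1.stronglyMeasurable
  have hD_int : ∀ t ∈ Set.Icc (0 : ℝ) T \ {t₀}, Integrable (D t) ℙ := by
    intro t ht
    refine Integrable.mono (hB_int.const_mul |t - t₀|⁻¹)
      (hD_meas t).aestronglyMeasurable (Filter.Eventually.of_forall fun ω => ?_)
    rw [Real.norm_eq_abs, Real.norm_eq_abs, abs_of_nonneg (hD_nonneg t ht ω),
      abs_of_nonneg (mul_nonneg (inv_nonneg.mpr (abs_nonneg _)) (hK_nonneg ω))]
    exact hD_le t ht ω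
  -- pointwise convergence of the difference quotient (FTC)
  have hptw : ∀ ω, Tendsto (fun t => D t ω) l₀ (nhds (B t₀ ω)) := by
    intro ω
    have hd : HasDerivAt (fun t => ∫ u in (0 : ℝ)..t, B u ω) (B t₀ ω) t₀ :=
      intervalIntegral.integral_hasDerivAt_right (hBi ω 0 t₀)
        (hB_cont ω).stronglyMeasurable.stronglyMeasurableAtFilter (hB_cont ω).continuousAt
    rw [hasDerivAt_iff_tendsto_slope] at hd
    have hmono : l₀ ≤ nhdsWithin t₀ {t₀}ᶜ :=
      nhdsWithin_mono t₀ fun x hx => hx.2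
    refine (hd.mono_left hmono).congr fun t => ?_
    simp only [slope_def_field, hD, hA]
  -- integrability of B t₀
  have hBt0_int : Integrable (B t₀) ℙ := by
    obtain ⟨s, hs_mem, hs_tend⟩ : ∃ s : ℕ → ℝ, (∀ n, s n ∈ Set.Icc (0 : ℝ) T \ {t₀}) ∧
        Tendsto s atTop l₀ := by
      rcases lt_or_eq_of_le ht₀T with h | h
      · have hmem : ∀ n : ℕ, t₀ + (T - t₀) / (n + 1) ∈ Set.Icc (0 : ℝ) T \ {t₀} := by
          intro n
          have h1 : (0:ℝ) < (T - t₀) / (n + 1) := div_pos (by linarith) (by positivity)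
          have h2 : (T - t₀) / (n + 1) ≤ T - t₀ := div_le_self (by linarith) (by norm_num)
          refine ⟨⟨by linarith, by linarith⟩, fun hh => ?_⟩
          rw [Set.mem_singleton_iff] at hh
          linarith
        refine ⟨fun n => t₀ + (T - t₀) / (n + 1), hmem, ?_⟩
        rw [hl₀, tendsto_nhdsWithin_iff]
        constructor
        · have h3 : Tendsto (fun n : ℕ => (T - t₀) * (1 / (n + 1))) atTop (nhds 0) := by
            simpa using tendsto_one_div_add_atTop_nhds_zero_nat.const_mul (T - t₀)
          have h4 : Tendsto (fun n : ℕ => t₀ + (T - t₀) * (1 / (n + 1))) atTop (nhds t₀) := by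
            simpa using tendsto_const_nhds.add h3
          refine h4.congr fun n => ?_
          rw [mul_one_div]
        · exact Filter.Eventually.of_forall hmem
      · have ht₀pos : 0 < t₀ := h ▸ hT
        have hmem : ∀ n : ℕ, t₀ - t₀ / (n + 1) ∈ Set.Icc (0 : ℝ) T \ {t₀} := by
          intro n
          have h1 : (0:ℝ) < t₀ / (n + 1) := div_pos ht₀pos (by positivity)
          have h2 : t₀ / (n + 1) ≤ t₀ := div_le_self ht₀pos.le (by norm_num)
          refine ⟨⟨by linarith, by linarith⟩, fun hh => ?_⟩
          rw [Set.mem_singleton_iff] at hh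
          linarith
        refine ⟨fun n => t₀ - t₀ / (n + 1), hmem, ?_⟩
        rw [hl₀, tendsto_nhdsWithin_iff]
        constructor
        · have h3 : Tendsto (fun n : ℕ => t₀ * (1 / (n + 1))) atTop (nhds 0) := by
            simpa using tendsto_one_div_add_atTop_nhds_zero_nat.const_mul t₀
          have h4 : Tendsto (fun n : ℕ => t₀ - t₀ * (1 / (n + 1))) atTop (nhds t₀) := by
            simpa using tendsto_const_nhds.sub h3
          refine h4.congr fun n => ?_
          rw [mul_one_div]
        · exact Filter.Eventually.of_forall hmem
    have h1 : ∀ n, ENNReal.ofReal (∫ ω, D (s n) ω ∂ℙ) = ∫⁻ ω, ENNReal.ofReal (D (s n) ω) ∂ℙ :=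
      fun n => ofReal_integral_eq_lintegral_ofReal (hD_int _ (hs_mem n))
        (Filter.Eventually.of_forall (hD_nonneg _ (hs_mem n)))
    have h2 : Tendsto (fun n => ∫ ω, D (s n) ω ∂ℙ) atTop (nhds c) := hLeb'.comp hs_tend
    have h3 : ∫⁻ ω, ENNReal.ofReal (B t₀ ω) ∂ℙ ≤ ENNReal.ofReal c := by
      calc ∫⁻ ω, ENNReal.ofReal (B t₀ ω) ∂ℙ
          = ∫⁻ ω, liminf (fun n => ENNReal.ofReal (D (s n) ω)) atTop ∂ℙ := by
            refine lintegral_congr fun ω => ?_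
            exact (((ENNReal.continuous_ofReal.tendsto _).comp
              ((hptw ω).comp hs_tend)).liminf_eq).symm
        _ ≤ liminf (fun n => ∫⁻ ω, ENNReal.ofReal (D (s n) ω) ∂ℙ) atTop :=
            lintegral_liminf_le fun n =>
              ENNReal.measurable_ofReal.comp (hD_meas (s n)).measurable
        _ = liminf (fun n => ENNReal.ofReal (∫ ω, D (s n) ω ∂ℙ)) atTop := by
            simp_rw [← h1]
        _ = ENNReal.ofReal c :=
            ((ENNReal.continuous_ofReal.tendsto _).comp h2).liminf_eq
    refine ⟨(hBm t₀).aestronglyMeasurable, ?_⟩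
    rw [hasFiniteIntegral_iff_norm]
    have heq : ∫⁻ ω, ENNReal.ofReal ‖B t₀ ω‖ ∂ℙ = ∫⁻ ω, ENNReal.ofReal (B t₀ ω) ∂ℙ :=
      lintegral_congr fun ω => by rw [Real.norm_eq_abs, abs_of_nonneg (hB_nonneg t₀ ω)]
    rw [heq]
    exact lt_of_le_of_lt h3 ENNReal.ofReal_lt_top
  -- Scheffé: L¹ convergence of the difference quotients
  have hmin_int : ∀ t ∈ Set.Icc (0 : ℝ) T \ {t₀},
      Integrable (fun ω => min (D t ω) (B t₀ ω)) ℙ := by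
    intro t ht
    refine Integrable.mono hBt0_int
      (((hD_meas t).measurable.min (hBm t₀).measurable).aestronglyMeasurable)
      (Filter.Eventually.of_forall fun ω => ?_)
    rw [Real.norm_eq_abs, Real.norm_eq_abs, abs_of_nonneg (hB_nonneg t₀ ω),
      abs_of_nonneg (le_min (hD_nonneg t ht ω) (hB_nonneg t₀ ω))]
    exact min_le_right _ _
  have hL1 : Tendsto (fun t => ∫ ω, |D t ω - B t₀ ω| ∂ℙ) l₀ (nhds 0) := by
    have hMtend : Tendsto (fun t => ∫ ω, min (D t ω) (B t₀ ω) ∂ℙ) l₀ (nhds c) := by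
      refine tendsto_integral_filter_of_dominated_convergence (fun ω => B t₀ ω) ?_ ?_ hBt0_int ?_
      · exact Filter.Eventually.of_forall fun t =>
          ((hD_meas t).measurable.min (hBm t₀).measurable).aestronglyMeasurable
      · filter_upwards [eventually_mem_nhdsWithin] with t ht
        refine Filter.Eventually.of_forall fun ω => ?_
        rw [Real.norm_eq_abs,
          abs_of_nonneg (le_min (hD_nonneg t ht ω) (hB_nonneg t₀ ω))]
        exact min_le_right _ _
      · refine Filter.Eventually.of_forall fun ω => ?_
        have h := (hptw ω).min (tendsto_const_nhds (x := B t₀ ω))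
        simpa using h
    have key : ∀ᶠ t in l₀, ∫ ω, D t ω ∂ℙ + c - 2 * ∫ ω, min (D t ω) (B t₀ ω) ∂ℙ
        = ∫ ω, |D t ω - B t₀ ω| ∂ℙ := by
      filter_upwards [eventually_mem_nhdsWithin] with t ht
      have hpt : ∀ ω, |D t ω - B t₀ ω|
          = D t ω + B t₀ ω - 2 * min (D t ω) (B t₀ ω) := by
        intro ω
        rcases le_total (D t ω) (B t₀ ω) with h | h
        · rw [min_eq_left h, abs_of_nonpos (by linarith)]; ring
        · rw [min_eq_right h, abs_of_nonneg (by linarith)]; ring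
      have heq2 : ∫ ω, |D t ω - B t₀ ω| ∂ℙ
          = ∫ ω, (D t ω + B t₀ ω - 2 * min (D t ω) (B t₀ ω)) ∂ℙ :=
        integral_congr_ae (Filter.Eventually.of_forall fun ω => hpt ω)
      have i1 : Integrable (fun ω => D t ω + B t₀ ω) ℙ := (hD_int t ht).add hBt0_int
      have i2 : Integrable (fun ω => 2 * min (D t ω) (B t₀ ω)) ℙ :=
        (hmin_int t ht).const_mul 2
      rw [heq2, integral_sub i1 i2, integral_add (hD_int t ht) hBt0_int,
        integral_const_mul, hc]
    have h := (hLeb'.add (tendsto_const_nhds (x := c))).sub (hMtend.const_mul 2)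
    have h0 : c + c - 2 * c = 0 := by ring
    rw [h0] at h
    exact h.congr' key
  -- subsets of the punctured interval
  have hIoc_sub : Set.Ioc t₀ T ⊆ Set.Icc (0 : ℝ) T \ {t₀} := fun x hx =>
    ⟨⟨le_trans ht₀0 hx.1.le, hx.2⟩, fun hh => by
      rw [Set.mem_singleton_iff] at hh; exact absurd hh (ne_of_gt hx.1)⟩
  have hIco_sub : Set.Ico (0 : ℝ) t₀ ⊆ Set.Icc (0 : ℝ) T \ {t₀} := fun x hx =>
    ⟨⟨hx.1, le_trans hx.2.le ht₀T⟩, fun hh => by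
      rw [Set.mem_singleton_iff] at hh; exact absurd hh (ne_of_lt hx.2)⟩
  constructor
  · -- right limit
    refine squeeze_zero' ?_ ?_ (hL1.mono_left (nhdsWithin_mono t₀ hIoc_sub))
    · exact Filter.Eventually.of_forall fun t => integral_nonneg fun ω => abs_nonneg _
    · filter_upwards [eventually_mem_nhdsWithin] with t ht
      have htm : t ∈ Set.Icc (0 : ℝ) T \ {t₀} := hIoc_sub ht
      have hne : t - t₀ ≠ 0 := sub_ne_zero.mpr (ne_of_gt ht.1)
      have hsmul : (fun ω' => A t ω' - A t₀ ω') = (t - t₀) • D t := by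
        funext ω
        simp only [Pi.smul_apply, hD, smul_eq_mul]
        rw [mul_comm, div_mul_cancel₀ _ hne]
      have e1 : ℙ[fun ω' => A t ω' - A t₀ ω'|F t₀] =ᵐ[ℙ] (t - t₀) • ℙ[D t|F t₀] := by
        rw [hsmul]; exact condExp_smul (t - t₀) (D t) (F t₀)
      have e2 : ℙ[fun ω => D t ω - B t₀ ω|F t₀] =ᵐ[ℙ] ℙ[D t|F t₀] - ℙ[B t₀|F t₀] :=
        condExp_sub (hD_int t htm) hBt0_int (F t₀)
      have e3 : ℙ[B t₀|F t₀] = B t₀ :=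
        condExp_of_stronglyMeasurable (F.le t₀) (hB_adapted t₀) hBt0_int
      have hcongr : ∫ ω, |(ℙ[fun ω' => A t ω' - A t₀ ω'|F t₀]) ω / (t - t₀) - B t₀ ω| ∂ℙ
          = ∫ ω, |(ℙ[fun ω => D t ω - B t₀ ω|F t₀]) ω| ∂ℙ := by
        refine integral_congr_ae ?_
        filter_upwards [e1, e2] with ω h1 h2
        rw [h1, Pi.smul_apply, smul_eq_mul, mul_comm, mul_div_assoc, div_self hne, mul_one,
          h2, Pi.sub_apply, e3]
      rw [hcongr]
      exact integral_abs_condExp_le _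
  · -- left limit
    have hcontr : ∀ s u : ℝ, s ≤ u →
        ∫ ω, |(ℙ[B t₀|F u]) ω - B t₀ ω| ∂ℙ ≤ 2 * ∫ ω, |(ℙ[B t₀|F s]) ω - B t₀ ω| ∂ℙ := by
      intro s u hsu
      have hmeasX : StronglyMeasurable[F u] (ℙ[B t₀|F s]) :=
        stronglyMeasurable_condExp.mono (F.mono hsu)
      have heq : ℙ[fun ω => B t₀ ω - (ℙ[B t₀|F s]) ω|F u]
          =ᵐ[ℙ] ℙ[B t₀|F u] - ℙ[B t₀|F s] := by
        refine (condExp_sub hBt0_int integrable_condExp (F u)).trans ?_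
        rw [condExp_of_stronglyMeasurable (F.le u) hmeasX integrable_condExp]
      have hstep : ∫ ω, |(ℙ[B t₀|F u]) ω - (ℙ[B t₀|F s]) ω| ∂ℙ
          ≤ ∫ ω, |(ℙ[B t₀|F s]) ω - B t₀ ω| ∂ℙ := by
        have hcongr2 : ∫ ω, |(ℙ[B t₀|F u]) ω - (ℙ[B t₀|F s]) ω| ∂ℙ
            = ∫ ω, |(ℙ[fun ω => B t₀ ω - (ℙ[B t₀|F s]) ω|F u]) ω| ∂ℙ := by
          refine integral_congr_ae ?_
          filter_upwards [heq] with ω h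
          rw [h, Pi.sub_apply]
        have hflip : ∫ ω, |B t₀ ω - (ℙ[B t₀|F s]) ω| ∂ℙ
            = ∫ ω, |(ℙ[B t₀|F s]) ω - B t₀ ω| ∂ℙ :=
          integral_congr_ae (Filter.Eventually.of_forall fun ω => abs_sub_comm _ _)
        rw [hcongr2]
        exact le_trans (integral_abs_condExp_le _) (le_of_eq hflip)
      have i1 : Integrable (fun ω => |(ℙ[B t₀|F u]) ω - (ℙ[B t₀|F s]) ω|) ℙ :=
        (integrable_condExp.sub integrable_condExp).abs
      have i2 : Integrable (fun ω => |(ℙ[B t₀|F s]) ω - B t₀ ω|) ℙ :=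
        (integrable_condExp.sub hBt0_int).abs
      have i0 : Integrable (fun ω => |(ℙ[B t₀|F u]) ω - B t₀ ω|) ℙ :=
        (integrable_condExp.sub hBt0_int).abs
      have hsum : Integrable (fun ω => |(ℙ[B t₀|F u]) ω - (ℙ[B t₀|F s]) ω|
          + |(ℙ[B t₀|F s]) ω - B t₀ ω|) ℙ := i1.add i2
      have htri : ∫ ω, |(ℙ[B t₀|F u]) ω - B t₀ ω| ∂ℙ
          ≤ ∫ ω, (|(ℙ[B t₀|F u]) ω - (ℙ[B t₀|F s]) ω|
            + |(ℙ[B t₀|F s]) ω - B t₀ ω|) ∂ℙ :=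
        integral_mono_ae i0 hsum (Filter.Eventually.of_forall fun ω => abs_sub_le _ _ _)
      rw [integral_add i1 i2] at htri
      linarith
    have hφ : Tendsto (fun t => ∫ ω, |(ℙ[B t₀|F t]) ω - B t₀ ω| ∂ℙ)
        (nhdsWithin t₀ (Set.Ico 0 t₀)) (nhds 0) := by
      rcases eq_or_lt_of_le ht₀0 with h0 | h0
      · rw [← h0, Set.Ico_self, nhdsWithin_empty]
        exact tendsto_bot
      · set v : ℕ → ℝ := fun k => t₀ - t₀ / (k + 1) with hv
        have hv_lt : ∀ k, v k < t₀ := fun k => by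
          have hp : (0:ℝ) < t₀ / (k + 1) := div_pos h0 (by positivity)
          show t₀ - t₀ / (k + 1) < t₀
          linarith
        have hv_mono : Monotone v := by
          intro i j hij
          have h1 : t₀ / ((j:ℝ) + 1) ≤ t₀ / ((i:ℝ) + 1) := by
            refine div_le_div_of_nonneg_left h0.le (by positivity) ?_
            have : (i:ℝ) ≤ (j:ℝ) := Nat.cast_le.mpr hij
            linarith
          show t₀ - t₀ / ((i:ℝ) + 1) ≤ t₀ - t₀ / ((j:ℝ) + 1)
          linarith
        set G : Filtration ℕ m0 :=
          { seq := fun k => F (v k)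
            mono' := fun i j hij => F.mono (hv_mono hij)
            le' := fun k => F.le (v k) } with hG
        have hsup : (⨆ k, (G k : MeasurableSpace Ω)) = (F t₀ : MeasurableSpace Ω) := by
          refine le_antisymm (iSup_le fun k => F.mono (hv_lt k).le) ?_
          rw [hF_left t₀ ⟨h0, ht₀T⟩]
          refine iSup_le fun s => iSup_le fun hs => ?_
          obtain ⟨k, hk⟩ := exists_nat_one_div_lt
            (show (0:ℝ) < (t₀ - s) / t₀ from div_pos (sub_pos.2 hs) h0)
          have hsv : s ≤ v k := by
            have h1 : t₀ / ((k:ℝ) + 1) < t₀ - s := by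
              calc t₀ / ((k:ℝ) + 1) = t₀ * (1 / ((k:ℝ) + 1)) := by ring
                _ < t₀ * ((t₀ - s) / t₀) := mul_lt_mul_of_pos_left hk h0
                _ = t₀ - s := by field_simp
            show s ≤ t₀ - t₀ / ((k:ℝ) + 1)
            linarith
          exact le_trans (F.mono hsv) (le_iSup (fun k => (G k : MeasurableSpace Ω)) k)
        have hmeas : StronglyMeasurable[⨆ k, (G k : MeasurableSpace Ω)] (B t₀) :=
          hsup ▸ hB_adapted t₀
        have hLevy := hBt0_int.tendsto_eLpNorm_condExp hmeas
        have hψ : Tendsto (fun k => ∫ ω, |(ℙ[B t₀|F (v k)]) ω - B t₀ ω| ∂ℙ)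
            atTop (nhds 0) := by
          have h2 := (ENNReal.tendsto_toReal (show (0:ENNReal) ≠ ⊤ by simp)).comp hLevy
          simp only [Function.comp_def, ENNReal.toReal_zero] at h2
          refine h2.congr fun k => ?_
          exact (integral_abs_sub_eq_toReal_eLpNorm ℙ integrable_condExp hBt0_int).symm
        rw [Metric.tendsto_nhds]
        intro ε hε
        obtain ⟨k, hk⟩ := (hψ.eventually (gt_mem_nhds (half_pos hε))).exists
        have hev1 : ∀ᶠ u in nhdsWithin t₀ (Set.Ico 0 t₀), v k < u :=
          (eventually_gt_nhds (hv_lt k)).filter_mono nhdsWithin_le_nhds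
        filter_upwards [hev1] with u hu
        rw [Real.dist_eq, sub_zero,
          abs_of_nonneg (integral_nonneg fun ω => abs_nonneg _)]
        calc ∫ ω, |(ℙ[B t₀|F u]) ω - B t₀ ω| ∂ℙ
            ≤ 2 * ∫ ω, |(ℙ[B t₀|F (v k)]) ω - B t₀ ω| ∂ℙ := hcontr (v k) u hu.le
          _ < ε := by linarith
    -- assemble the left limit
    have hL1' : Tendsto (fun t => ∫ ω, |D t ω - B t₀ ω| ∂ℙ)
        (nhdsWithin t₀ (Set.Ico 0 t₀)) (nhds 0) :=
      hL1.mono_left (nhdsWithin_mono t₀ hIco_sub)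
    have hbound := hL1'.add hφ
    rw [add_zero] at hbound
    refine squeeze_zero' ?_ ?_ hbound
    · exact Filter.Eventually.of_forall fun t => integral_nonneg fun ω => abs_nonneg _
    · filter_upwards [eventually_mem_nhdsWithin] with t ht
      have htm : t ∈ Set.Icc (0 : ℝ) T \ {t₀} := hIco_sub ht
      have hne : t₀ - t ≠ 0 := sub_ne_zero.mpr (ne_of_gt ht.2)
      have hne' : t - t₀ ≠ 0 := sub_ne_zero.mpr (ne_of_lt ht.2)
      have hsmul : (fun ω' => A t₀ ω' - A t ω') = (t₀ - t) • D t := by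
        funext ω
        simp only [Pi.smul_apply, hD, smul_eq_mul]
        field_simp
        ring
      have e1 : ℙ[fun ω' => A t₀ ω' - A t ω'|F t] =ᵐ[ℙ] (t₀ - t) • ℙ[D t|F t] := by
        rw [hsmul]; exact condExp_smul (t₀ - t) (D t) (F t)
      have e2 : ℙ[fun ω => D t ω - B t₀ ω|F t] =ᵐ[ℙ] ℙ[D t|F t] - ℙ[B t₀|F t] :=
        condExp_sub (hD_int t htm) hBt0_int (F t)
      have hcongr : ∫ ω, |(ℙ[fun ω' => A t₀ ω' - A t ω'|F t]) ω / (t₀ - t) - B t₀ ω| ∂ℙ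
          = ∫ ω, |(ℙ[fun ω => D t ω - B t₀ ω|F t]) ω
              + ((ℙ[B t₀|F t]) ω - B t₀ ω)| ∂ℙ := by
        refine integral_congr_ae ?_
        filter_upwards [e1, e2] with ω h1 h2
        rw [h1, Pi.smul_apply, smul_eq_mul, mul_comm, mul_div_assoc, div_self hne, mul_one,
          h2, Pi.sub_apply]
        congr 1
        ring
      have i1 : Integrable (fun ω => |(ℙ[fun ω => D t ω - B t₀ ω|F t]) ω|) ℙ :=
        integrable_condExp.abs
      have i2 : Integrable (fun ω => |(ℙ[B t₀|F t]) ω - B t₀ ω|) ℙ :=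
        (integrable_condExp.sub hBt0_int).abs
      have i0 : Integrable (fun ω => |(ℙ[fun ω => D t ω - B t₀ ω|F t]) ω
          + ((ℙ[B t₀|F t]) ω - B t₀ ω)|) ℙ :=
        (integrable_condExp.add (integrable_condExp.sub hBt0_int)).abs
      have hsum : Integrable (fun ω => |(ℙ[fun ω => D t ω - B t₀ ω|F t]) ω|
          + |(ℙ[B t₀|F t]) ω - B t₀ ω|) ℙ := i1.add i2
      have htri : ∫ ω, |(ℙ[fun ω => D t ω - B t₀ ω|F t]) ω
            + ((ℙ[B t₀|F t]) ω - B t₀ ω)| ∂ℙ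
          ≤ ∫ ω, (|(ℙ[fun ω => D t ω - B t₀ ω|F t]) ω|
            + |(ℙ[B t₀|F t]) ω - B t₀ ω|) ∂ℙ :=
        integral_mono_ae i0 hsum (Filter.Eventually.of_forall fun ω => abs_add_le _ _)
      rw [integral_add i1 i2] at htri
      have hcond := integral_abs_condExp_le (μ := ℙ) (m := F t) fun ω => D t ω - B t₀ ω
      rw [hcongr]
      calc ∫ ω, |(ℙ[fun ω => D t ω - B t₀ ω|F t]) ω + ((ℙ[B t₀|F t]) ω - B t₀ ω)| ∂ℙ
          ≤ ∫ ω, |(ℙ[fun ω => D t ω - B t₀ ω|F t]) ω| ∂ℙ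
            + ∫ ω, |(ℙ[B t₀|F t]) ω - B t₀ ω| ∂ℙ := htri
        _ ≤ ∫ ω, |D t ω - B t₀ ω| ∂ℙ + ∫ ω, |(ℙ[B t₀|F t]) ω - B t₀ ω| ∂ℙ := by
            linarith
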